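/- If a phase automaton A is inductive with respect to a transition system TS (i.e., initiation, inductiveness along edges, and edge covering hold for every valuation of the view variables), then A is a phase invariant of TS: every finite trace of TS, under every valuation, admits a corresponding trace of phases of A such that each state satisfies its phase characterization and each consecutive pair of states satisfies the edge-labeling relation. -/
import Mathlib


/-- If a phase automaton is inductive w.r.t. a transition system, it is a phase invariant. -/
theorem inductive_phase_automaton_is_phase_invariant
    {S V Q : Type*} [Fintype Q]
    (Init : Set S) (TR : Set (S × S)) (ι : Q)
    (δ : Q → Q → V → Set (S × S)) (φ : Q → V → Set S)
    (hinit : ∀ v, Init ⊆ φ ι v)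
    (hind : ∀ q p v σ σ', σ ∈ φ q v → (σ, σ') ∈ δ q p v → σ' ∈ φ p v)
    (hcov : ∀ q v σ σ', σ ∈ φ q v → (σ, σ') ∈ TR → ∃ p, (σ, σ') ∈ δ q p v) :
    ∀ (n : ℕ) (σ : ℕ → S), σ 0 ∈ Init → (∀ i < n, (σ i, σ (i + 1)) ∈ TR) →
      ∀ v : V, ∃ qs : ℕ → Q, qs 0 = ι ∧
        (∀ i < n, (σ i, σ (i + 1)) ∈ δ (qs i) (qs (i + 1)) v) ∧
        (∀ i ≤ n, σ i ∈ φ (qs i) v) := by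
  intro n
  induction n with
  | zero =>
    intro σ h0 _ v
    exact ⟨fun _ => ι, rfl, fun i hi => absurd hi (Nat.not_lt_zero i),
      fun i hi => by simp [Nat.le_zero.mp hi]; exact hinit v h0⟩
  | succ n ih =>
    intro σ h0 hTR v
    obtain ⟨qs, hq0, hδ, hφ⟩ := ih σ h0 (fun i hi => hTR i (Nat.lt_succ_of_lt hi)) v
    obtain ⟨p, hp⟩ := hcov (qs n) v (σ n) (σ (n + 1)) (hφ n le_rfl) (hTR n (Nat.lt_succ_self n))
    refine ⟨fun i => if i ≤ n then qs i else p, by simp [hq0], ?_, ?_⟩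
    · intro i hi
      rcases Nat.lt_succ_iff_lt_or_eq.mp hi with h | h
      · simp [Nat.le_of_lt h, Nat.succ_le_of_lt h]
        exact hδ i h
      · subst h
        simp [Nat.lt_irrefl]
        exact hp
    · intro i hi
      by_cases h : i ≤ n
      · simp [h]
        exact hφ i h
      · have : i = n + 1 := le_antisymm hi (Nat.not_le.mp h)
        subst this
        simp [Nat.lt_irrefl]
        exact hind (qs n) p v (σ n) (σ (n + 1)) (hφ n le_rfl) hp
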